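/- For any coordinatewise non-increasing testing policy D : [0,1]^K → {0,1}^K that is coordinatewise right-continuous at zero, D strongly controls FWER at level α (for all parameter configurations satisfying the extreme-alternative assumption) if and only if for every nonempty I ⊆ [K], ∫_{[0,1]^{|I|}} max_{k ∈ I} D_k(p_I^0) dp_I ≤ α, where p_I^0 is the vector that equals p on coordinates in I and 0 elsewhere. -/

import Mathlib

open MeasureTheory

section Aux

variable {K : ℕ}

lemma aux_unif_prob : IsProbabilityMeasure (volume.restrict (Set.Icc (0:ℝ) 1)) := by
  constructor
  rw [Measure.restrict_apply_univ, Real.volume_Icc]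
  norm_num

/-- Pushforward of a product measure under the coordinatewise map that keeps
coordinates in `I` and sets the others to `c`. -/
lemma aux_pi_map (I : Finset (Fin K)) (c : ℝ) (ν : Fin K → Measure ℝ)
    (hprob : ∀ k, IsProbabilityMeasure (ν k)) :
    MeasurePreserving (fun p (i : Fin K) => if i ∈ I then p i else c)
      (Measure.pi ν) (Measure.pi fun i => if i ∈ I then ν i else Measure.dirac c) := by
  haveI := hprob
  haveI : ∀ i, IsProbabilityMeasure ((fun i => if i ∈ I then ν i else Measure.dirac c) i) := by
    intro i; by_cases hi : i ∈ I <;> simp [hi] <;> infer_instance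
  have h := measurePreserving_pi ν (fun i => if i ∈ I then ν i else Measure.dirac c)
    (f := fun i => if i ∈ I then (fun x : ℝ => x) else (fun _ : ℝ => c)) ?_
  · have heq : (fun (a : Fin K → ℝ) i =>
        (if i ∈ I then (fun x : ℝ => x) else (fun _ : ℝ => c)) (a i))
        = fun p (i : Fin K) => if i ∈ I then p i else c := by
      funext p i; by_cases hi : i ∈ I <;> simp [hi]
    rwa [heq] at h
  · intro i
    by_cases hi : i ∈ I
    · simp only [if_pos hi]
      exact MeasurePreserving.id _
    · simp only [if_neg hi]
      refine ⟨measurable_const, ?_⟩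
      rw [Measure.map_const, measure_univ, one_smul]

/-- The key `{0,1}`-valued right-continuity consequence: if `D q k = 1` where `q`
vanishes on a finite set `S`, then raising all coordinates of `S` to any small
enough positive value keeps the decision at 1. -/
lemma aux_evone (D : (Fin K → ℝ) → Fin K → ℝ)
    (hD01 : ∀ p k, D p k = 0 ∨ D p k = 1)
    (hmono : ∀ p q : Fin K → ℝ, (∀ i, p i ≤ q i) → ∀ k, D q k ≤ D p k)
    (hrc : ∀ (p : Fin K → ℝ) (i k : Fin K),
      Filter.Tendsto (fun ε : ℝ => D (Function.update p i ε) k)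
        (nhdsWithin 0 (Set.Ioi 0)) (nhds (D (Function.update p i 0) k)))
    (k : Fin K) (S : Finset (Fin K)) :
    ∀ q : Fin K → ℝ, (∀ j ∈ S, q j = 0) → D q k = 1 →
      ∃ ε > 0, ∀ ε' : ℝ, 0 < ε' → ε' ≤ ε →
        D (fun j => if j ∈ S then ε' else q j) k = 1 := by
  classical
  induction S using Finset.induction_on with
  | empty =>
      intro q _ hq1
      exact ⟨1, one_pos, fun ε' _ _ => by simpa using hq1⟩
  | @insert i S hiS IH =>
      intro q hq0 hq1
      -- right-continuity at coordinate i
      have hqi : q i = 0 := hq0 i (Finset.mem_insert_self i S)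
      have hupd : Function.update q i 0 = q := by
        rw [← hqi]; exact Function.update_eq_self i q
      have htend := hrc q i k
      rw [hupd, hq1] at htend
      have hev : ∀ᶠ ε : ℝ in nhdsWithin 0 (Set.Ioi 0),
          (1/2 : ℝ) < D (Function.update q i ε) k :=
        htend.eventually (eventually_gt_nhds (by norm_num))
      obtain ⟨εi, hεiIoi, hεihalf⟩ := (eventually_mem_nhdsWithin.and hev).exists
      have hεi : (0:ℝ) < εi := hεiIoi
      have hD1 : D (Function.update q i εi) k = 1 := by
        rcases hD01 (Function.update q i εi) k with h0 | h1
        · rw [h0] at hεihalf; norm_num at hεihalf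
        · exact h1
      -- apply IH to q' = update q i εi
      have hq'0 : ∀ j ∈ S, Function.update q i εi j = 0 := by
        intro j hj
        have hji : j ≠ i := fun h => hiS (h ▸ hj)
        rw [Function.update_of_ne hji]
        exact hq0 j (Finset.mem_insert_of_mem hj)
      obtain ⟨εS, hεS, hP⟩ := IH (Function.update q i εi) hq'0 hD1
      refine ⟨min εi εS, lt_min hεi hεS, ?_⟩
      intro ε' hε'pos hε'le
      have hle1 : ε' ≤ εi := hε'le.trans (min_le_left _ _)
      have hle2 : ε' ≤ εS := hε'le.trans (min_le_right _ _)
      have hr' := hP ε' hε'pos hle2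
      have hcmp : ∀ j, (fun j => if j ∈ insert i S then ε' else q j) j
          ≤ (fun j => if j ∈ S then ε' else Function.update q i εi j) j := by
        intro j
        by_cases hjS : j ∈ S
        · simp [hjS, Finset.mem_insert_of_mem hjS]
        · by_cases hji : j = i
          · subst hji
            simp [hjS, Finset.mem_insert_self, Function.update_self, hle1]
          · simp [hjS, hji, Function.update_of_ne hji]
      have := hmono _ _ hcmp k
      rw [hr'] at this
      rcases hD01 (fun j => if j ∈ insert i S then ε' else q j) k with h0 | h1
      · rw [h0] at this; norm_num at this
      · exact h1

/-- The integral of the `sup'`-decision function equals the measure of the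
rejection event, transported through `G`. -/
lemma aux_integral_eq (D : (Fin K → ℝ) → Fin K → ℝ)
    (hD01 : ∀ p k, D p k = 0 ∨ D p k = 1)
    (hDmeas : ∀ k, Measurable fun p => D p k)
    (I : Finset (Fin K)) (hI : I.Nonempty)
    (G : (Fin K → ℝ) → (Fin K → ℝ)) (hG : Measurable G)
    (μ' : Measure (Fin K → ℝ)) [IsFiniteMeasure μ'] :
    ∫ p, (I.sup' hI fun k => D (G p) k) ∂μ'
      = (μ' (G ⁻¹' {q | ∃ k ∈ I, D q k = 1})).toReal := by
  classical
  have hSmeas : MeasurableSet {q : Fin K → ℝ | ∃ k ∈ I, D q k = 1} := by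
    have : {q : Fin K → ℝ | ∃ k ∈ I, D q k = 1}
        = ⋃ k ∈ I, (fun q => D q k) ⁻¹' {1} := by
      ext q; simp [Set.mem_iUnion]
    rw [this]
    exact MeasurableSet.biUnion I.countable_toSet
      (fun k _ => hDmeas k (measurableSet_singleton 1))
  have hfun : (fun p => I.sup' hI fun k => D (G p) k)
      = Set.indicator (G ⁻¹' {q | ∃ k ∈ I, D q k = 1}) (fun _ => (1:ℝ)) := by
    funext p
    by_cases hp : ∃ k ∈ I, D (G p) k = 1
    · rw [Set.indicator_of_mem (show p ∈ G ⁻¹' {q | ∃ k ∈ I, D q k = 1} from hp)]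
      obtain ⟨k, hk, hk1⟩ := hp
      refine le_antisymm ?_ ?_
      · refine Finset.sup'_le hI _ fun j _ => ?_
        rcases hD01 (G p) j with h | h <;> rw [h] <;> norm_num
      · calc (1:ℝ) = D (G p) k := hk1.symm
          _ ≤ _ := Finset.le_sup' _ hk
    · rw [Set.indicator_of_notMem (show p ∉ G ⁻¹' {q | ∃ k ∈ I, D q k = 1} from hp)]
      push_neg at hp
      refine le_antisymm ?_ ?_
      · refine Finset.sup'_le hI _ fun j hj => ?_
        rcases hD01 (G p) j with h | h
        · rw [h]
        · exact absurd h (hp j hj)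
      · obtain ⟨k, hk⟩ := hI
        calc (0:ℝ) = D (G p) k := by
              rcases hD01 (G p) k with h | h
              · exact h.symm
              · exact absurd h (hp k hk)
          _ ≤ _ := Finset.le_sup' _ hk
  rw [hfun]
  have := integral_indicator_one (μ := μ') (hG hSmeas)
  rw [measureReal_def] at this
  exact this

end Aux

/-- integral characterization of strong FWER control. A monotone
(coordinatewise non-increasing), coordinatewise right-continuous-at-zero policy `D`
with values in {0,1} strongly controls the FWER at level α — i.e., for every truth
vector `h` and every configuration of independent p-value distributions on [0,1] that
are Uniform(0,1) on the true nulls, the probability of a false rejection is ≤ α —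
if and only if for every nonempty `I ⊆ [K]`,
`∫_{[0,1]^K} max_{k ∈ I} D_k(p_I^0) dp ≤ α`, where `p_I^0` zeroes the coordinates
outside `I`. -/
theorem stmt11 (K : ℕ) (α : ℝ) (hα0 : 0 ≤ α) (hα1 : α ≤ 1)
    (D : (Fin K → ℝ) → Fin K → ℝ)
    (hD01 : ∀ p k, D p k = 0 ∨ D p k = 1)
    (hDmeas : ∀ k, Measurable fun p => D p k)
    (hmono : ∀ p q : Fin K → ℝ, (∀ i, p i ≤ q i) → ∀ k, D q k ≤ D p k)
    (hrc : ∀ (p : Fin K → ℝ) (i k : Fin K),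
      Filter.Tendsto (fun ε : ℝ => D (Function.update p i ε) k)
        (nhdsWithin 0 (Set.Ioi 0)) (nhds (D (Function.update p i 0) k))) :
    ((∀ (h : Fin K → Bool) (ν : Fin K → Measure ℝ),
        (∀ k, IsProbabilityMeasure (ν k)) →
        (∀ k, ν k (Set.Icc (0:ℝ) 1)ᶜ = 0) →
        (∀ k, h k = false → ν k = volume.restrict (Set.Icc 0 1)) →
        Measure.pi ν {p | ∃ k, h k = false ∧ D p k = 1} ≤ ENNReal.ofReal α)
      ↔ (∀ (I : Finset (Fin K)) (hI : I.Nonempty),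
          ∫ p, (I.sup' hI fun k => D (fun i => if i ∈ I then p i else 0) k)
            ∂(Measure.pi fun _ : Fin K => volume.restrict (Set.Icc (0:ℝ) 1)) ≤ α)) := by
  classical
  haveI hUnif : IsProbabilityMeasure (volume.restrict (Set.Icc (0:ℝ) 1)) := aux_unif_prob
  set μ : Measure (Fin K → ℝ) :=
    Measure.pi fun _ : Fin K => volume.restrict (Set.Icc (0:ℝ) 1) with hμ
  haveI : IsProbabilityMeasure μ := by rw [hμ]; infer_instance
  constructor
  · -- FWER control → integral bounds
    intro hF I hI
    -- the transported rejection set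
    set S : Set (Fin K → ℝ) := {q | ∃ k ∈ I, D q k = 1} with hS
    have hSmeas : MeasurableSet S := by
      have : S = ⋃ k ∈ I, (fun q => D q k) ⁻¹' {1} := by
        ext q; simp [hS, Set.mem_iUnion]
      rw [this]
      exact MeasurableSet.biUnion I.countable_toSet
        (fun k _ => hDmeas k (measurableSet_singleton 1))
    have hGmeas : ∀ c : ℝ, Measurable (fun (p : Fin K → ℝ) (i : Fin K) => if i ∈ I then p i else c) := by
      intro c
      apply measurable_pi_lambda
      intro i
      by_cases hi : i ∈ I <;> simp only [hi, if_true, if_false]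
      · exact measurable_pi_apply i
      · exact measurable_const
    -- step 1: for every n, the integral at level ε n = 1/(n+1) is ≤ α
    have hstep : ∀ n : ℕ,
        ∫ p, (I.sup' hI fun k => D (fun i => if i ∈ I then p i else 1/(n+1)) k) ∂μ ≤ α := by
      intro n
      set ε : ℝ := 1/(n+1) with hε
      have hεpos : 0 < ε := by positivity
      have hεle : ε ≤ 1 := by
        rw [hε]
        rw [div_le_one (by positivity)]
        linarith [Nat.cast_nonneg (α := ℝ) n]
      set h : Fin K → Bool := fun k => decide (k ∉ I) with hh
      set ν : Fin K → Measure ℝ :=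
        fun k => if k ∈ I then volume.restrict (Set.Icc (0:ℝ) 1) else Measure.dirac ε with hν
      have hνprob : ∀ k, IsProbabilityMeasure (ν k) := by
        intro k; rw [hν]; by_cases hk : k ∈ I <;> simp [hk] <;> infer_instance
      have hhI : ∀ k, h k = false ↔ k ∈ I := by
        intro k; rw [hh]; simp
      have key := hF h ν hνprob ?_ ?_
      · -- identify the event and the measure
        have hevent : {p : Fin K → ℝ | ∃ k, h k = false ∧ D p k = 1} = S := by
          ext p
          simp only [hS, Set.mem_setOf_eq]
          constructor
          · rintro ⟨k, hk, h1⟩; exact ⟨k, (hhI k).mp hk, h1⟩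
          · rintro ⟨k, hk, h1⟩; exact ⟨k, (hhI k).mpr hk, h1⟩
        rw [hevent] at key
        have hmp := aux_pi_map I ε (fun _ => volume.restrict (Set.Icc (0:ℝ) 1))
          (fun _ => hUnif)
        have hνeq : (fun i => if i ∈ I then volume.restrict (Set.Icc (0:ℝ) 1)
            else Measure.dirac ε) = ν := by
          funext i; rw [hν]
        rw [hνeq] at hmp
        have hpre := hmp.measure_preimage hSmeas.nullMeasurableSet
        have hint : ∫ p, (I.sup' hI fun k => D (fun i => if i ∈ I then p i else ε) k) ∂μ
            = (μ ((fun (p : Fin K → ℝ) (i : Fin K) => if i ∈ I then p i else ε) ⁻¹' S)).toReal :=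
          aux_integral_eq D hD01 hDmeas I hI _ (hGmeas ε) μ
        rw [hint, hpre]
        exact ENNReal.toReal_le_of_le_ofReal hα0 key
      · -- null outside [0,1]
        intro k
        rw [hν]
        by_cases hk : k ∈ I
        · simp only [if_pos hk]
          rw [Measure.restrict_apply (measurableSet_Icc.compl)]
          simp
        · simp only [if_neg hk]
          rw [Measure.dirac_apply' _ measurableSet_Icc.compl]
          have : ε ∈ Set.Icc (0:ℝ) 1 := ⟨le_of_lt hεpos, hεle⟩
          simp [this]
      · intro k hk
        have hkI := (hhI k).mp hk
        simp [hν, hkI]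
    -- step 2: pointwise convergence
    have hptw : ∀ p : Fin K → ℝ,
        Filter.Tendsto (fun n : ℕ =>
            I.sup' hI fun k => D (fun i => if i ∈ I then p i else 1/(n+1)) k)
          Filter.atTop
          (nhds (I.sup' hI fun k => D (fun i => if i ∈ I then p i else 0) k)) := by
      intro p
      have hk1 : ∀ k ∈ I, ∀ᶠ n : ℕ in Filter.atTop,
          D (fun i => if i ∈ I then p i else 1/(n+1)) k
            = D (fun i => if i ∈ I then p i else 0) k := by
        intro k _
        set q : Fin K → ℝ := fun i => if i ∈ I then p i else 0 with hq
        rcases hD01 q k with h0 | h1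
        · refine Filter.Eventually.of_forall fun n => ?_
          have hle : ∀ i, q i ≤ (fun i => if i ∈ I then p i else 1/((n:ℝ)+1)) i := by
            intro i
            by_cases hi : i ∈ I
            · simp [hq, hi]
            · simp only [hq, hi, if_false]
              positivity
          have hmle := hmono q _ hle k
          rw [h0] at hmle
          rcases hD01 (fun i => if i ∈ I then p i else 1/((n:ℝ)+1)) k with ha | hb
          · rw [ha, h0]
          · rw [hb] at hmle; norm_num at hmle
        · have hq0 : ∀ j ∈ Iᶜ, q j = 0 := by
            intro j hj
            simp [hq, Finset.mem_compl.mp hj]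
          obtain ⟨ε, hεpos, hP⟩ := aux_evone D hD01 hmono hrc k Iᶜ q hq0 h1
          obtain ⟨N, hN⟩ := exists_nat_one_div_lt hεpos
          refine Filter.eventually_atTop.mpr ⟨N, fun n hn => ?_⟩
          have h2 : (fun j => if j ∈ Iᶜ then 1/((n:ℝ)+1) else q j)
              = fun i => if i ∈ I then p i else 1/((n:ℝ)+1) := by
            funext j
            by_cases hj : j ∈ I <;> simp [Finset.mem_compl, hj, hq]
          have hle2 : (1:ℝ)/((n:ℝ)+1) ≤ ε := by
            have hcast : (N:ℝ) ≤ n := Nat.cast_le.mpr hn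
            calc (1:ℝ)/((n:ℝ)+1) ≤ 1/((N:ℝ)+1) := by
                  apply one_div_le_one_div_of_le (by positivity)
                  linarith
              _ ≤ ε := hN.le
          have h3 := hP (1/((n:ℝ)+1)) (by positivity) hle2
          rw [h2] at h3
          exact h3.trans h1.symm
      have hall := (Filter.eventually_all_finset I).mpr hk1
      refine Filter.Tendsto.congr' ?_ tendsto_const_nhds
      filter_upwards [hall] with n hn
      exact Finset.sup'_congr hI rfl (fun k hk => (hn k hk).symm)
    -- step 3: dominated convergence
    have hFmeas : ∀ n : ℕ, AEStronglyMeasurable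
        (fun p : Fin K → ℝ =>
          I.sup' hI fun k => D (fun i => if i ∈ I then p i else 1/((n:ℝ)+1)) k) μ := by
      intro n
      apply Measurable.aestronglyMeasurable
      have hm : Measurable (I.sup' hI (fun k (p : Fin K → ℝ) =>
          D (fun i => if i ∈ I then p i else 1/((n:ℝ)+1)) k)) :=
        Finset.measurable_sup' hI (fun k _ => (hDmeas k).comp (hGmeas (1/((n:ℝ)+1))))
      have he : (fun p : Fin K → ℝ =>
            I.sup' hI fun k => D (fun i => if i ∈ I then p i else 1/((n:ℝ)+1)) k)
          = I.sup' hI (fun k (p : Fin K → ℝ) =>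
            D (fun i => if i ∈ I then p i else 1/((n:ℝ)+1)) k) := by
        funext p; rw [Finset.sup'_apply]
      rw [he]; exact hm
    have hbound : ∀ n : ℕ, ∀ᵐ p ∂μ,
        ‖(fun p : Fin K → ℝ =>
            I.sup' hI fun k => D (fun i => if i ∈ I then p i else 1/((n:ℝ)+1)) k) p‖
          ≤ (1:ℝ) := by
      intro n
      refine Filter.Eventually.of_forall fun p => ?_
      rw [Real.norm_eq_abs, abs_le]
      obtain ⟨k, hk⟩ := id hI
      constructor
      · refine le_trans (by norm_num : (-1:ℝ) ≤ (0:ℝ)) (le_trans ?_ (Finset.le_sup' _ hk))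
        rcases hD01 (fun i => if i ∈ I then p i else 1/((n:ℝ)+1)) k with ha | ha <;>
          rw [ha] <;> norm_num
      · refine Finset.sup'_le hI _ fun j _ => ?_
        rcases hD01 (fun i => if i ∈ I then p i else 1/((n:ℝ)+1)) j with ha | ha <;>
          rw [ha] <;> norm_num
    have hDC := MeasureTheory.tendsto_integral_of_dominated_convergence
      (μ := μ)
      (F := fun (n : ℕ) (p : Fin K → ℝ) =>
        I.sup' hI fun k => D (fun i => if i ∈ I then p i else 1/((n:ℝ)+1)) k)
      (f := fun p : Fin K → ℝ =>
        I.sup' hI fun k => D (fun i => if i ∈ I then p i else 0) k)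
      (bound := fun _ => (1:ℝ)) hFmeas (integrable_const 1) hbound
      (Filter.Eventually.of_forall hptw)
    exact le_of_tendsto hDC (Filter.Eventually.of_forall hstep)
  · -- integral bounds → FWER control
    intro hInt h ν hνprob hνnull hνunif
    haveI := hνprob
    set I : Finset (Fin K) := Finset.univ.filter (fun k => h k = false) with hIdef
    have hmemI : ∀ k, k ∈ I ↔ h k = false := by
      intro k; rw [hIdef]; simp
    rcases Finset.eq_empty_or_nonempty I with hIe | hI
    · have : {p : Fin K → ℝ | ∃ k, h k = false ∧ D p k = 1} = ∅ := by
        ext p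
        simp only [Set.mem_setOf_eq, Set.mem_empty_iff_false, iff_false, not_exists]
        intro k ⟨hk, _⟩
        exact absurd ((hmemI k).mpr hk) (by rw [hIe]; simp)
      rw [this]
      simp
    · set S : Set (Fin K → ℝ) := {q | ∃ k ∈ I, D q k = 1} with hS
      have hSmeas : MeasurableSet S := by
        have : S = ⋃ k ∈ I, (fun q => D q k) ⁻¹' {1} := by
          ext q; simp [hS, Set.mem_iUnion]
        rw [this]
        exact MeasurableSet.biUnion I.countable_toSet
          (fun k _ => hDmeas k (measurableSet_singleton 1))
      set G : (Fin K → ℝ) → (Fin K → ℝ) := fun p i => if i ∈ I then p i else 0 with hG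
      have hGmeas : Measurable G := by
        apply measurable_pi_lambda
        intro i
        by_cases hi : i ∈ I <;> simp only [hG, hi, if_true, if_false]
        · exact measurable_pi_apply i
        · exact measurable_const
      -- the box has full measure
      set box : Set (Fin K → ℝ) := Set.univ.pi (fun _ => Set.Icc (0:ℝ) 1) with hbox
      have hboxmeas : MeasurableSet box :=
        MeasurableSet.univ_pi fun _ => measurableSet_Icc
      have hbox1 : Measure.pi ν box = 1 := by
        rw [hbox, Measure.pi_pi]
        have : ∀ k, ν k (Set.Icc (0:ℝ) 1) = 1 := by
          intro k
          have h1 := measure_add_measure_compl (μ := ν k) (measurableSet_Icc (a := (0:ℝ)) (b := 1))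
          rw [hνnull k, add_zero, measure_univ] at h1
          exact h1
        simp [this]
      have hboxc : Measure.pi ν boxᶜ = 0 := by
        rw [measure_compl hboxmeas (by finiteness), measure_univ, hbox1, tsub_self]
      -- inclusion
      have hincl : {p : Fin K → ℝ | ∃ k, h k = false ∧ D p k = 1} ⊆ (G ⁻¹' S) ∪ boxᶜ := by
        intro p hp
        by_cases hpb : p ∈ box
        · left
          obtain ⟨k, hk, hk1⟩ := hp
          refine ⟨k, (hmemI k).mpr hk, ?_⟩
          have hle : ∀ i, G p i ≤ p i := by
            intro i
            rw [hG]
            by_cases hi : i ∈ I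
            · simp [hi]
            · simp only [hi, if_false]
              exact (hpb i (Set.mem_univ i)).1
          have := hmono (G p) p hle k
          rw [hk1] at this
          rcases hD01 (G p) k with h0 | h1
          · rw [h0] at this; norm_num at this
          · exact h1
        · right; exact hpb
      calc Measure.pi ν {p | ∃ k, h k = false ∧ D p k = 1}
          ≤ Measure.pi ν ((G ⁻¹' S) ∪ boxᶜ) := measure_mono hincl
        _ ≤ Measure.pi ν (G ⁻¹' S) + Measure.pi ν boxᶜ := measure_union_le _ _
        _ = Measure.pi ν (G ⁻¹' S) := by rw [hboxc, add_zero]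
        _ = μ (G ⁻¹' S) := by
            have h1 := aux_pi_map I 0 ν hνprob
            have h2 := aux_pi_map I 0 (fun _ => volume.restrict (Set.Icc (0:ℝ) 1))
              (fun _ => hUnif)
            have hcongr : (fun i => if i ∈ I then ν i else Measure.dirac (0:ℝ))
                = fun i => if i ∈ I then volume.restrict (Set.Icc (0:ℝ) 1)
                    else Measure.dirac (0:ℝ) := by
              funext i
              by_cases hi : i ∈ I
              · simp only [if_pos hi]
                exact hνunif i ((hmemI i).mp hi)
              · simp [hi]
            rw [h1.measure_preimage hSmeas.nullMeasurableSet, hcongr,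
              ← h2.measure_preimage hSmeas.nullMeasurableSet]
        _ ≤ ENNReal.ofReal α := by
            have hint := aux_integral_eq D hD01 hDmeas I hI G hGmeas μ
            have hle := hInt I hI
            have hGS : ∫ p, (I.sup' hI fun k => D (G p) k) ∂μ ≤ α := hle
            rw [hint] at hGS
            calc μ (G ⁻¹' S) = ENNReal.ofReal ((μ (G ⁻¹' S)).toReal) :=
                  (ENNReal.ofReal_toReal (by finiteness)).symm
              _ ≤ ENNReal.ofReal α := ENNReal.ofReal_le_ofReal hGS
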